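/- There exists an absolute constant C > 0 such that the following holds for all ε ∈ (0, 1/2]. Let M* ∈ ℝ^{p1×p2} have rank r with SVD M* = U*·Σ·V*^T, where Σ ∈ ℝ^{r×r} is diagonal with positive entries and U*, V* have orthonormal columns; set L* = U*·Σ^{1/2} and R* = V*·Σ^{1/2}. Let L ∈ ℝ^{p1×r}, R ∈ ℝ^{p2×r}, Δ_L = L − L*, Δ_R = R − R*, and suppose ‖Δ_L·Σ^{1/2}‖_F^2 + ‖Δ_R·Σ^{1/2}‖_F^2 ≤ ε^2·σ_r(M*)^2. Then: max(‖Δ_L·Σ^{-1/2}‖, ‖Δ_R·Σ^{-1/2}‖) ≤ ε; ‖L(L^T·L)^{-1}·Σ^{1/2}‖ ≤ 1 + C·ε; ‖R(R^T·R)^{-1}·Σ^{1/2}‖ ≤ 1 + C·ε; ‖L(L^T·L)^{-1}·Σ^{1/2} − U*‖ ≤ C·ε; and ‖R(R^T·R)^{-1}·Σ^{1/2} − V*‖ ≤ C·ε. -/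

import Mathlib

noncomputable section

open scoped BigOperators

namespace HomoPursuit

open Matrix

/-- Squared Frobenius norm of a real matrix. -/
def frobSq {m n : Type*} [Fintype m] [Fintype n] (A : Matrix m n ℝ) : ℝ :=
  ∑ i, ∑ j, (A i j) ^ 2

/-- Frobenius norm of a real matrix. -/
def frob {m n : Type*} [Fintype m] [Fintype n] (A : Matrix m n ℝ) : ℝ :=
  Real.sqrt (frobSq A)

/-- Frobenius inner product `⟨A, B⟩ = tr(Aᵀ B)`. -/
def mdot {m n : Type*} [Fintype m] [Fintype n] (A B : Matrix m n ℝ) : ℝ :=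
  ∑ i, ∑ j, A i j * B i j

/-- The `j`-th largest singular value of a real matrix (1-indexed); `0` if out of range. -/
def sval {m n : Type*} [Fintype m] [Fintype n] [DecidableEq n] (A : Matrix m n ℝ) (j : ℕ) : ℝ :=
  (((Finset.univ.val.map fun i =>
      Real.sqrt ((show (Aᵀ * A).IsHermitian from by
        rw [← Matrix.conjTranspose_eq_transpose_of_trivial]
        exact Matrix.isHermitian_conjTranspose_mul_self A).eigenvalues i)).toList.insertionSort
      (· ≥ ·)).getD (j - 1) 0)

/-- Spectral (operator) norm: the largest singular value. -/
def spec {m n : Type*} [Fintype m] [Fintype n] [DecidableEq n] (A : Matrix m n ℝ) : ℝ :=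
  sval A 1

/-- The positive-semidefinite square root `(Aᵀ A)^{1/2}` of a Gram matrix. -/
def gramSqrt {m k : Type*} [Fintype m] [Fintype k] [DecidableEq k] (A : Matrix m k ℝ) :
    Matrix k k ℝ :=
  let hA := (Matrix.posSemidef_conjTranspose_mul_self A).1
  (hA.eigenvectorUnitary : Matrix k k ℝ) *
    Matrix.diagonal ((RCLike.ofReal : ℝ → ℝ) ∘ Real.sqrt ∘ hA.eigenvalues) *
    (star hA.eigenvectorUnitary : Matrix k k ℝ)

/-- `(Aᵀ A)^{-1/2}`. -/
def invGramSqrt {m k : Type*} [Fintype m] [Fintype k] [DecidableEq k] (A : Matrix m k ℝ) :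
    Matrix k k ℝ :=
  (gramSqrt A)⁻¹

/-- Square root of a diagonal matrix with given (nonnegative) diagonal entries. -/
def diagSqrt {k : ℕ} (d : Fin k → ℝ) : Matrix (Fin k) (Fin k) ℝ :=
  Matrix.diagonal fun j => Real.sqrt (d j)


open scoped Matrix.Norms.L2Operator

theorem isHermitian_tmul {m n : Type*} [Fintype m] [Fintype n] (A : Matrix m n ℝ) :
    (Aᵀ * A).IsHermitian := by
  rw [← Matrix.conjTranspose_eq_transpose_of_trivial]
  exact Matrix.isHermitian_conjTranspose_mul_self A

set_option linter.unusedSectionVars false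
set_option maxHeartbeats 1000000
section Helpers

variable {m n k : Type*} [Fintype m] [Fintype n] [Fintype k] [DecidableEq m] [DecidableEq n] [DecidableEq k]

def toE {k : Type*} [Fintype k] (v : k → ℝ) : EuclideanSpace ℝ k :=
  (WithLp.equiv 2 (k → ℝ)).symm v

lemma inner_toE (v w : k → ℝ) : (inner ℝ (toE v) (toE w) : ℝ) = ∑ i, v i * w i := by
  simp [toE, PiLp.inner_apply, RCLike.inner_apply, conj_trivial, mul_comm]

lemma norm_toE_sq (v : k → ℝ) : ‖toE v‖ ^ 2 = ∑ i, v i ^ 2 := by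
  rw [← real_inner_self_eq_norm_sq, inner_toE]; simp [sq]

lemma opnorm_le_bound (A : Matrix m n ℝ) {c : ℝ} (hc : 0 ≤ c)
    (h : ∀ v : n → ℝ, ‖toE (A *ᵥ v)‖ ≤ c * ‖toE v‖) : ‖A‖ ≤ c := by
  rw [Matrix.l2_opNorm_def]
  refine ContinuousLinearMap.opNorm_le_bound _ hc fun x => ?_
  exact h (WithLp.equiv 2 (n → ℝ) x)

lemma mulVec_le (A : Matrix m n ℝ) (v : n → ℝ) :
    ‖toE (A *ᵥ v)‖ ≤ ‖A‖ * ‖toE v‖ :=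
  Matrix.l2_opNorm_mulVec A (toE v)

lemma inner_mulVec (A : Matrix m n ℝ) (x : n → ℝ) (y : m → ℝ) :
    (inner ℝ (toE (A *ᵥ x)) (toE y) : ℝ) = inner ℝ (toE x) (toE (Aᵀ *ᵥ y)) := by
  simp only [inner_toE, mulVec, dotProduct, transpose_apply, Finset.sum_mul, Finset.mul_sum]
  rw [Finset.sum_comm]
  exact Finset.sum_congr rfl fun j _ => Finset.sum_congr rfl fun i _ => by ring

lemma norm_mulVec_sq (A : Matrix m n ℝ) (x : n → ℝ) :
    ‖toE (A *ᵥ x)‖ ^ 2 = (inner ℝ (toE x) (toE ((Aᵀ * A) *ᵥ x)) : ℝ) := by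
  rw [← real_inner_self_eq_norm_sq, inner_mulVec, ← Matrix.mulVec_mulVec]

-- quadratic form expansion through the eigenbasis
lemma quad_expand (A : Matrix m n ℝ) (x : n → ℝ) :
    ‖toE (A *ᵥ x)‖ ^ 2 =
      ∑ i, (isHermitian_tmul A).eigenvalues i *
        ((isHermitian_tmul A).eigenvectorBasis.repr (toE x) i) ^ 2 := by
  set hA := isHermitian_tmul A with hhA
  set b := hA.eigenvectorBasis with hb
  have hct : Aᴴ = Aᵀ := Matrix.conjTranspose_eq_transpose_of_trivial A
  have h0 : ‖toE (A *ᵥ x)‖ ^ 2 = (inner ℝ (toE x) (toE ((Aᴴ * A) *ᵥ x)) : ℝ) := by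
    rw [hct]; exact norm_mulVec_sq A x
  have hBsymm : (Aᴴ * A)ᵀ = Aᴴ * A := by
    rw [hct, ← Matrix.conjTranspose_eq_transpose_of_trivial (Aᵀ * A), hA.eq]
  -- self-adjointness of the quadratic form
  have hrep : ∀ i, b.repr (toE ((Aᴴ * A) *ᵥ x)) i = hA.eigenvalues i * b.repr (toE x) i := by
    intro i
    rw [OrthonormalBasis.repr_apply_apply, OrthonormalBasis.repr_apply_apply]
    have h1 : (inner ℝ (b i) (toE ((Aᴴ * A) *ᵥ x)) : ℝ)
        = inner ℝ (toE ((Aᴴ * A) *ᵥ ⇑(b i))) (toE x) := by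
      rw [inner_mulVec, hBsymm]; rfl
    rw [h1, hct, hA.mulVec_eigenvectorBasis i,
      show toE (hA.eigenvalues i • ⇑(b i)) = hA.eigenvalues i • (b i) from rfl,
      real_inner_smul_left]
  have h3 : (inner ℝ (toE x) (toE ((Aᴴ * A) *ᵥ x)) : ℝ)
      = inner ℝ (b.repr (toE x)) (b.repr (toE ((Aᴴ * A) *ᵥ x))) := by
    rw [b.repr.inner_map_map]
  rw [h0, h3, PiLp.inner_apply]
  refine Finset.sum_congr rfl fun i _ => ?_
  rw [hrep i]
  simp [RCLike.inner_apply, conj_trivial]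
  ring


lemma eigen_nonneg (A : Matrix m n ℝ) (i : n) :
    0 ≤ (isHermitian_tmul A).eigenvalues i :=
  Matrix.eigenvalues_conjTranspose_mul_self_nonneg A i

-- ‖x‖² = ∑ (repr x i)²  for the eigen-basis repr
lemma repr_norm_sq (A : Matrix m n ℝ) (x : n → ℝ) :
    ‖toE x‖ ^ 2 = ∑ i, ((isHermitian_tmul A).eigenvectorBasis.repr (toE x) i) ^ 2 := by
  set b := (isHermitian_tmul A).eigenvectorBasis
  have h : ‖toE x‖ = ‖b.repr (toE x)‖ := (b.repr.norm_map (toE x)).symm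
  rw [h, ← real_inner_self_eq_norm_sq, PiLp.inner_apply]
  simp [RCLike.inner_apply, conj_trivial, sq]

lemma sqrt_eigen_le_norm (A : Matrix m n ℝ) (i : n) :
    Real.sqrt ((isHermitian_tmul A).eigenvalues i) ≤ ‖A‖ := by
  set hA := isHermitian_tmul A
  set b := hA.eigenvectorBasis with hbdef
  set u : n → ℝ := ⇑(b i) with hu
  have hbu : toE u = b i := rfl
  have h1 : ‖toE (A *ᵥ u)‖ ^ 2 = hA.eigenvalues i := by
    rw [quad_expand]
    rw [show (isHermitian_tmul A).eigenvectorBasis.repr (toE u)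
        = EuclideanSpace.single i (1:ℝ) from by rw [hbu]; exact b.repr_self i]
    rw [Fintype.sum_eq_single i ?h]
    · simp [EuclideanSpace.single_apply]
    · intro j hj
      simp [EuclideanSpace.single_apply, hj]
  have h2 : ‖toE (A *ᵥ u)‖ ≤ ‖A‖ * ‖toE u‖ := Matrix.l2_opNorm_mulVec A (toE u)
  have h3 : ‖toE u‖ = 1 := by rw [hbu]; exact b.orthonormal.1 i
  rw [h3, mul_one] at h2
  have := Real.sqrt_le_sqrt (le_of_eq h1.symm)
  calc Real.sqrt (hA.eigenvalues i) = ‖toE (A *ᵥ u)‖ := by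
        rw [← h1, Real.sqrt_sq (norm_nonneg _)]
    _ ≤ ‖A‖ := h2

lemma norm_le_of_eigen_le (A : Matrix m n ℝ) {c : ℝ} (hc : 0 ≤ c)
    (h : ∀ i, Real.sqrt ((isHermitian_tmul A).eigenvalues i) ≤ c) :
    ‖A‖ ≤ c := by
  refine opnorm_le_bound A hc fun v => ?_
  have h1 : ‖toE (A *ᵥ v)‖ ^ 2 ≤ (c * ‖toE v‖) ^ 2 := by
    rw [quad_expand, mul_pow, repr_norm_sq A v, Finset.mul_sum]
    refine Finset.sum_le_sum fun i _ => ?_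
    have h2 : (isHermitian_tmul A).eigenvalues i ≤ c ^ 2 := by
      have := h i
      have h3 := Real.sq_sqrt (eigen_nonneg A i)
      nlinarith [Real.sqrt_nonneg ((isHermitian_tmul A).eigenvalues i)]
    exact mul_le_mul_of_nonneg_right h2 (sq_nonneg _)
  have h2 : (0:ℝ) ≤ c * ‖toE v‖ := mul_nonneg hc (norm_nonneg _)
  nlinarith [norm_nonneg (toE (A *ᵥ v))]

lemma opnorm_le_bound' (A : Matrix m n ℝ) {c : ℝ} (hc : 0 ≤ c)
    (h : ∀ v : n → ℝ, ‖toE (A *ᵥ v)‖ ≤ c * ‖toE v‖) : ‖A‖ ≤ c := opnorm_le_bound A hc h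

-- the bridge
lemma spec_eq_norm (A : Matrix m n ℝ) : spec A = ‖A‖ := by
  classical
  set f : n → ℝ := fun i => Real.sqrt ((isHermitian_tmul A).eigenvalues i)
  set l : List ℝ := (Finset.univ.val.map f).toList with hl
  set s : List ℝ := l.insertionSort (· ≥ ·) with hs
  have hperm : List.Perm s l := List.perm_insertionSort (· ≥ ·) l
  have hmem : ∀ x, x ∈ l ↔ ∃ i, f i = x := by
    intro x
    rw [hl, Multiset.mem_toList, Multiset.mem_map]
    simp
  have hspec : spec A = s.getD 0 0 := rfl
  cases isEmpty_or_nonempty n with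
  | inl hempty =>
    have hl0 : l = [] := by
      rw [hl]
      simp [Finset.univ_eq_empty]
    have hs0 : s = [] := by rw [hs, hl0]; rfl
    rw [hspec, hs0]
    have : ‖A‖ ≤ 0 := by
      refine opnorm_le_bound A le_rfl fun v => ?_
      have : v = 0 := Subsingleton.elim v 0
      subst this
      simp [Matrix.mulVec_zero, toE]
    simp only [List.getD_nil]
    have h2 : (0:ℝ) ≤ ‖A‖ := norm_nonneg A
    linarith
  | inr hne =>
    have hlen : s ≠ [] := by
      have : l ≠ [] := by
        intro hcon
        have h5 := (hmem (f (Classical.arbitrary n))).mpr ⟨_, rfl⟩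
        rw [hcon] at h5
        exact List.not_mem_nil h5
      intro hcon
      exact this (List.Perm.eq_nil (hcon ▸ hperm : List.Perm [] l).symm)
    obtain ⟨a, t, hat⟩ := List.exists_cons_of_ne_nil hlen
    have hsort : s.Pairwise (· ≥ ·) := List.pairwise_insertionSort (· ≥ ·) l
    have hhead : s.getD 0 0 = a := by rw [hat]; rfl
    have hamem : a ∈ l := hperm.mem_iff.mp (hat ▸ List.mem_cons_self (a := a) (l := t))
    obtain ⟨i0, hi0⟩ := (hmem a).mp hamem
    have hge : ∀ x ∈ l, x ≤ a := by
      intro x hx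
      have hxs : x ∈ s := hperm.mem_iff.mpr hx
      rw [hat] at hxs
      rcases List.mem_cons.mp hxs with h | h
      · exact le_of_eq h
      · rw [hat] at hsort
        exact (List.pairwise_cons.mp hsort).1 x h
    rw [hspec, hhead]
    apply le_antisymm
    · rw [← hi0]; exact sqrt_eigen_le_norm A i0
    · refine norm_le_of_eigen_le A ?_ fun i => ?_
      · rw [← hi0]; exact Real.sqrt_nonneg _
      · exact hge (f i) ((hmem (f i)).mpr ⟨i, rfl⟩)

lemma sorted_getD_le (t : ℝ) (ht : 0 ≤ t) :
    ∀ (s : List ℝ) (k : ℕ), s.Pairwise (· ≥ ·) →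
      (s.countP fun x => decide (t < x)) ≤ k → s.getD k 0 ≤ t := by
  intro s
  induction s with
  | nil => intro k _ _; simp [List.getD_nil]; exact ht
  | cons a tl ih =>
    intro k hsort hcount
    have hsort' := List.pairwise_cons.mp hsort
    rw [List.countP_cons] at hcount
    cases k with
    | zero =>
      simp only [List.getD_cons_zero]
      by_contra hgt
      push_neg at hgt
      have : decide (t < a) = true := by simp [hgt]
      rw [this] at hcount
      simp at hcount
    | succ k =>
      simp only [List.getD_cons_succ]
      refine ih k hsort'.2 ?_
      by_cases hta : t < a
      · have hd : decide (t < a) = true := by simp [hta]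
        rw [hd] at hcount
        norm_num at hcount
        omega
      · -- all elements of tl are ≤ a ≤ t, so count is 0
        have hz : (tl.countP fun x => decide (t < x)) = 0 := by
          rw [List.countP_eq_zero]
          intro x hx
          have hxa : a ≥ x := hsort'.1 x hx
          push_neg at hta
          simp only [decide_eq_true_eq]
          push_neg
          exact le_trans hxa hta
        omega

lemma sval_nonneg (A : Matrix m n ℝ) (j : ℕ) : 0 ≤ sval A j := by
  classical
  set f : n → ℝ := fun i => Real.sqrt ((isHermitian_tmul A).eigenvalues i)
  set l : List ℝ := (Finset.univ.val.map f).toList with hl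
  set s : List ℝ := l.insertionSort (· ≥ ·) with hs
  have hsval : sval A j = s.getD (j-1) 0 := rfl
  rw [hsval]
  by_cases hk : j - 1 < s.length
  · rw [List.getD_eq_getElem s 0 hk]
    have hmem : s[j-1] ∈ s := List.getElem_mem hk
    have hmem2 : s[j-1] ∈ l := (List.perm_insertionSort (· ≥ ·) l).mem_iff.mp hmem
    obtain ⟨i, _, hi⟩ := Multiset.mem_map.mp (Multiset.mem_toList.mp hmem2)
    rw [← hi]
    exact Real.sqrt_nonneg _
  · rw [List.getD_eq_default s 0 (le_of_not_gt hk)]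

lemma sval_le_of_count (A : Matrix m n ℝ) (t : ℝ) (ht : 0 ≤ t) (k : ℕ)
    (h : (Finset.univ.filter fun i =>
        t < Real.sqrt ((isHermitian_tmul A).eigenvalues i)).card ≤ k) :
    sval A (k + 1) ≤ t := by
  classical
  set f : n → ℝ := fun i => Real.sqrt ((isHermitian_tmul A).eigenvalues i)
  set l : List ℝ := (Finset.univ.val.map f).toList with hl
  set s : List ℝ := l.insertionSort (· ≥ ·) with hs
  have hsval : sval A (k+1) = s.getD k 0 := rfl
  rw [hsval]
  refine sorted_getD_le t ht s k (List.pairwise_insertionSort (· ≥ ·) l) ?_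
  have hcount : (s.countP fun x => decide (t < x)) = (l.countP fun x => decide (t < x)) :=
    (List.perm_insertionSort (· ≥ ·) l).countP_eq _
  rw [hcount]
  have h2 : (l.countP fun x => decide (t < x))
      = Multiset.countP (fun x => t < x) (Finset.univ.val.map f) := by
    rw [hl]
    rw [← Multiset.coe_countP]
    rw [Multiset.coe_toList]
  rw [h2, Multiset.countP_map]
  have h3 : (Finset.univ.filter fun i => t < f i).card
      = Multiset.card (Multiset.filter (fun a => t < f a) Finset.univ.val) := by
    rw [Finset.card, Finset.filter_val]
  rw [← h3]
  exact h

lemma count_eigen_le {p1 p2 r : ℕ} (Ms : Matrix (Fin p1) (Fin p2) ℝ)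
    (Us : Matrix (Fin p1) (Fin r) ℝ) (Vs : Matrix (Fin p2) (Fin r) ℝ) (Sd : Fin r → ℝ)
    (hSd : ∀ j, 0 < Sd j) (hU : Usᵀ * Us = 1) (hV : Vsᵀ * Vs = 1)
    (hM : Ms = Us * Matrix.diagonal Sd * Vsᵀ) (j0 : Fin r) (hmin : ∀ j, Sd j0 ≤ Sd j) :
    (Finset.univ.filter fun i =>
      Sd j0 < Real.sqrt ((isHermitian_tmul Ms).eigenvalues i)).card ≤ r - 1 := by
  classical
  set hA := isHermitian_tmul Ms with hhA
  set lam := hA.eigenvalues with hlam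
  set b := hA.eigenvectorBasis with hb
  have hct : Msᴴ = Msᵀ := Matrix.conjTranspose_eq_transpose_of_trivial Ms
  have hB : Msᴴ * Ms = Vs * Matrix.diagonal (fun j => Sd j * Sd j) * Vsᵀ := by
    rw [hct, hM]
    rw [Matrix.transpose_mul, Matrix.transpose_mul, Matrix.transpose_transpose,
      Matrix.diagonal_transpose]
    have e : Vs * (Matrix.diagonal Sd * Usᵀ) * (Us * Matrix.diagonal Sd * Vsᵀ)
        = Vs * (Matrix.diagonal Sd * ((Usᵀ * Us) * (Matrix.diagonal Sd * Vsᵀ))) := by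
      simp only [Matrix.mul_assoc]
    rw [e, hU, Matrix.one_mul, ← Matrix.mul_assoc (Matrix.diagonal Sd),
      Matrix.diagonal_mul_diagonal, ← Matrix.mul_assoc]
  set S := Finset.univ.filter fun i : Fin p2 => Sd j0 < Real.sqrt (lam i) with hS
  -- eigenvector data
  have hgt : ∀ i : Fin p2, i ∈ S → Sd j0 * Sd j0 < lam i := by
    intro i hi
    rw [hS, Finset.mem_filter] at hi
    have h1 := hi.2
    have h2 : 0 ≤ Sd j0 := (hSd j0).le
    have h3 : Real.sqrt (lam i) * Real.sqrt (lam i) = lam i :=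
      Real.mul_self_sqrt (Matrix.eigenvalues_conjTranspose_mul_self_nonneg Ms i)
    nlinarith
  -- main per-eigenvector facts
  have key : ∀ i : Fin p2, i ∈ S →
      (Vsᵀ *ᵥ ⇑(b i)) j0 = 0 ∧ ⇑(b i) = Vs *ᵥ (Vsᵀ *ᵥ ⇑(b i)) := by
    intro i hi
    set u := ⇑(b i) with hu
    set w := Vsᵀ *ᵥ u with hw
    have hlampos : 0 < lam i := lt_of_le_of_lt (mul_nonneg (hSd j0).le (hSd j0).le) (hgt i hi)
    have h1 : (Msᴴ * Ms) *ᵥ u = lam i • u := hA.mulVec_eigenvectorBasis i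
    rw [hB] at h1
    have hVB : Vsᵀ * (Vs * Matrix.diagonal (fun j => Sd j * Sd j) * Vsᵀ)
        = Matrix.diagonal (fun j => Sd j * Sd j) * Vsᵀ := by
      rw [← Matrix.mul_assoc, ← Matrix.mul_assoc, hV, Matrix.one_mul]
    have h2 : Matrix.diagonal (fun j => Sd j * Sd j) *ᵥ w = lam i • w := by
      calc Matrix.diagonal (fun j => Sd j * Sd j) *ᵥ w
          = (Matrix.diagonal (fun j => Sd j * Sd j) * Vsᵀ) *ᵥ u := by
            rw [hw, Matrix.mulVec_mulVec]
        _ = (Vsᵀ * (Vs * Matrix.diagonal (fun j => Sd j * Sd j) * Vsᵀ)) *ᵥ u := by rw [hVB]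
        _ = Vsᵀ *ᵥ ((Vs * Matrix.diagonal (fun j => Sd j * Sd j) * Vsᵀ) *ᵥ u) := by
            rw [Matrix.mulVec_mulVec]
        _ = Vsᵀ *ᵥ (lam i • u) := by rw [h1]
        _ = lam i • w := by rw [Matrix.mulVec_smul, hw]
    have h3 : u = Vs *ᵥ w := by
      have h4 : lam i • u = lam i • (Vs *ᵥ w) := by
        calc lam i • u = (Vs * Matrix.diagonal (fun j => Sd j * Sd j) * Vsᵀ) *ᵥ u := h1.symm
          _ = Vs *ᵥ (Matrix.diagonal (fun j => Sd j * Sd j) *ᵥ (Vsᵀ *ᵥ u)) := by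
              rw [Matrix.mulVec_mulVec, Matrix.mulVec_mulVec, Matrix.mul_assoc]
          _ = Vs *ᵥ (lam i • w) := by rw [← hw, h2]
          _ = lam i • (Vs *ᵥ w) := by rw [Matrix.mulVec_smul]
      exact smul_right_injective _ (ne_of_gt hlampos) h4
    constructor
    · have h6 := congrFun h2 j0
      simp only [Matrix.mulVec_diagonal, Pi.smul_apply, smul_eq_mul] at h6
      have h7 := hgt i hi
      have h9 : (lam i - Sd j0 * Sd j0) * w j0 = 0 := by linear_combination -h6
      rcases mul_eq_zero.mp h9 with h | h
      · exact absurd h (ne_of_gt (by linarith))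
      · exact h
    · exact h3
  -- orthonormal family in a hyperplane
  set T := {i : Fin p2 // i ∈ S}
  set v : T → EuclideanSpace ℝ {j : Fin r // j ≠ j0} :=
    fun i => toE (fun j => (Vsᵀ *ᵥ ⇑(b i.1)) j.1) with hv
  have hortho : Orthonormal ℝ v := by
    rw [orthonormal_iff_ite]
    intro i k
    have hbase := orthonormal_iff_ite.mp b.orthonormal i.1 k.1
    -- inner of b's is dot of coords
    have hdot : (inner ℝ (b i.1) (b k.1) : ℝ) = ∑ t, ⇑(b i.1) t * ⇑(b k.1) t := by
      rw [PiLp.inner_apply]; simp [RCLike.inner_apply, conj_trivial, mul_comm]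
    set wi := Vsᵀ *ᵥ ⇑(b i.1) with hwi
    set wk := Vsᵀ *ᵥ ⇑(b k.1) with hwk
    have hui := (key i.1 i.2).2
    have huk := (key k.1 k.2).2
    have hsum : ∑ t, ⇑(b i.1) t * ⇑(b k.1) t = ∑ j, wi j * wk j := by
      have e1 : ∑ t, ⇑(b i.1) t * ⇑(b k.1) t = (Vs *ᵥ wi) ⬝ᵥ (Vs *ᵥ wk) := by
        rw [← hui, ← huk]; rfl
      rw [e1, Matrix.dotProduct_mulVec]
      have e2 : (Vs *ᵥ wi) ᵥ* Vs = wi := by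
        rw [← Matrix.vecMul_transpose, Matrix.vecMul_vecMul, hV, Matrix.vecMul_one]
      rw [e2]; rfl
    have hinnerv : (inner ℝ (v i) (v k) : ℝ) = ∑ j, wi j * wk j := by
      rw [hv]
      simp only []
      rw [inner_toE]
      have hzero : wi j0 * wk j0 = 0 := by rw [hwi, (key i.1 i.2).1, zero_mul]
      rw [show (∑ j, wi j * wk j)
          = wi j0 * wk j0 + ∑ j ∈ Finset.univ.erase j0, wi j * wk j from
        (Finset.add_sum_erase Finset.univ (fun j => wi j * wk j) (Finset.mem_univ j0)).symm]
      rw [hzero, zero_add]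
      rw [Finset.sum_subtype (p := fun j : Fin r => j ≠ j0) (s := Finset.univ.erase j0)
        (fun j => by simp [Finset.mem_erase]) (f := fun j => wi j * wk j)]
    rw [hinnerv, ← hsum, ← hdot, hbase]
    by_cases h : i = k
    · simp [h]
    · have : i.1 ≠ k.1 := fun hc => h (Subtype.ext hc)
      simp [h, this]
  have hcard : Fintype.card T ≤ Module.finrank ℝ
      (EuclideanSpace ℝ {j : Fin r // j ≠ j0}) :=
    hortho.linearIndependent.fintype_card_le_finrank
  rw [finrank_euclideanSpace] at hcard
  have hcard2 : Fintype.card {j : Fin r // j ≠ j0} = r - 1 := by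
    have h10 : Fintype.card {j : Fin r // ¬ j = j0} = r - 1 := by
      rw [Fintype.card_subtype_compl, Fintype.card_subtype_eq, Fintype.card_fin]
    simpa using h10
  have hScard : S.card = Fintype.card T := (Fintype.card_coe S).symm
  rw [hScard]
  exact hcard2 ▸ hcard

-- part-1 helpers
lemma norm_diagonal_le (d : k → ℝ) {c : ℝ} (hc : 0 ≤ c)
    (h : ∀ j, |d j| ≤ c) : ‖Matrix.diagonal d‖ ≤ c := by
  refine opnorm_le_bound _ hc fun v => ?_
  have h1 : ‖toE (Matrix.diagonal d *ᵥ v)‖ ^ 2 ≤ (c * ‖toE v‖) ^ 2 := by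
    rw [norm_toE_sq, mul_pow, norm_toE_sq, Finset.mul_sum]
    refine Finset.sum_le_sum fun i _ => ?_
    rw [Matrix.mulVec_diagonal, mul_pow]
    have hd : d i ^ 2 ≤ c ^ 2 := by nlinarith [sq_abs (d i), h i, abs_nonneg (d i)]
    exact mul_le_mul_of_nonneg_right hd (sq_nonneg _)
  have h2 : (0:ℝ) ≤ c * ‖toE v‖ := mul_nonneg hc (norm_nonneg _)
  nlinarith [norm_nonneg (toE (Matrix.diagonal d *ᵥ v))]

lemma norm_isometry (U : Matrix m n ℝ) (hU : Uᵀ * U = 1) (v : n → ℝ) :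
    ‖toE (U *ᵥ v)‖ = ‖toE v‖ := by
  have h := norm_mulVec_sq U v
  rw [hU, Matrix.one_mulVec, real_inner_self_eq_norm_sq] at h
  have := norm_nonneg (toE (U *ᵥ v)); have := norm_nonneg (toE v)
  nlinarith

lemma frobSq_nonneg (A : Matrix m n ℝ) : 0 ≤ frobSq A :=
  Finset.sum_nonneg fun i _ => Finset.sum_nonneg fun j _ => sq_nonneg _

lemma norm_frob_le (A : Matrix m n ℝ) : ‖A‖ ≤ frob A := by
  have hnn : (0:ℝ) ≤ frob A := Real.sqrt_nonneg _
  refine opnorm_le_bound _ hnn fun v => ?_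
  have h1 : ‖toE (A *ᵥ v)‖ ^ 2 ≤ (frob A * ‖toE v‖) ^ 2 := by
    rw [norm_toE_sq, mul_pow, frob, Real.sq_sqrt (frobSq_nonneg A), frobSq, Finset.sum_mul]
    refine Finset.sum_le_sum fun i _ => ?_
    have hcs := Finset.sum_mul_sq_le_sq_mul_sq Finset.univ (fun j => A i j) v
    calc (A *ᵥ v) i ^ 2 = (∑ j, A i j * v j) ^ 2 := rfl
      _ ≤ (∑ j, (A i j)^2) * (∑ j, (v j)^2) := hcs
      _ = (∑ j, (A i j)^2) * ‖toE v‖^2 := by rw [norm_toE_sq]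
  have h2 : (0:ℝ) ≤ frob A * ‖toE v‖ := mul_nonneg hnn (norm_nonneg _)
  nlinarith [norm_nonneg (toE (A *ᵥ v))]

lemma toE_injective : Function.Injective (toE (k := k)) := fun a b h => by
  have := congrArg (WithLp.equiv 2 (k → ℝ)) h
  simpa [toE] using this

-- the central perturbation estimate in operator-norm form
lemma side {p r : ℕ} (U X : Matrix (Fin p) (Fin r) ℝ) {ε : ℝ} (hε0 : 0 < ε) (hε : ε ≤ 1/2)
    (hU : Uᵀ * U = 1) (hE : ‖X - U‖ ≤ ε) :
    ‖X * (Xᵀ * X)⁻¹ - U‖ ≤ 16 * ε ∧ ‖X * (Xᵀ * X)⁻¹‖ ≤ 1 + 16 * ε := by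
  have hUnorm : ‖U‖ ≤ 1 := opnorm_le_bound U zero_le_one fun v => by
    rw [norm_isometry U hU v, one_mul]

  have hq : (1/4 : ℝ) ≤ (1 - ε)^2 := by nlinarith
  have hXlow : ∀ v : Fin r → ℝ, (1 - ε) * ‖toE v‖ ≤ ‖toE (X *ᵥ v)‖ := by
    intro v
    have h1 : ‖toE ((X - U) *ᵥ v)‖ ≤ ε * ‖toE v‖ :=
      le_trans (mulVec_le _ v) (mul_le_mul_of_nonneg_right hE (norm_nonneg _))
    have h2 : toE (X *ᵥ v) = toE (U *ᵥ v) + toE ((X - U) *ᵥ v) := by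
      rw [show X = U + (X - U) from by abel, Matrix.add_mulVec]
      simp only [add_sub_cancel_left]
      rfl
    have h3 : ‖toE (U *ᵥ v)‖ ≤ ‖toE (X *ᵥ v)‖ + ‖toE ((X - U) *ᵥ v)‖ := by
      calc ‖toE (U *ᵥ v)‖
          = ‖(toE (U *ᵥ v) + toE ((X-U) *ᵥ v)) - toE ((X-U) *ᵥ v)‖ := by
            rw [add_sub_cancel_right]
        _ ≤ ‖toE (U *ᵥ v) + toE ((X-U) *ᵥ v)‖ + ‖toE ((X-U) *ᵥ v)‖ := norm_sub_le _ _
        _ = ‖toE (X *ᵥ v)‖ + ‖toE ((X-U) *ᵥ v)‖ := by rw [← h2]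
    rw [norm_isometry U hU v] at h3
    nlinarith [norm_nonneg (toE v)]
  have hGlow : ∀ v : Fin r → ℝ, (1-ε)^2 * ‖toE v‖ ≤ ‖toE ((Xᵀ * X) *ᵥ v)‖ := by
    intro v
    rcases eq_or_ne (toE v) 0 with hv | hv
    · have hv0 : v = 0 := toE_injective (by rw [hv]; rfl)
      subst hv0
      simp only [Matrix.mulVec_zero, hv, norm_zero, mul_zero, le_refl]
    · have hpos : 0 < ‖toE v‖ := norm_pos_iff.mpr hv
      have h1 : ‖toE (X *ᵥ v)‖ ^ 2 = (inner ℝ (toE v) (toE ((Xᵀ * X) *ᵥ v)) : ℝ) :=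
        norm_mulVec_sq X v
      have h2 : (inner ℝ (toE v) (toE ((Xᵀ*X) *ᵥ v)) : ℝ)
          ≤ ‖toE v‖ * ‖toE ((Xᵀ*X) *ᵥ v)‖ := real_inner_le_norm _ _
      have h3 := hXlow v
      have h4 : (0:ℝ) ≤ (1 - ε) * ‖toE v‖ := by nlinarith [norm_nonneg (toE v)]
      nlinarith [norm_nonneg (toE (X *ᵥ v)), norm_nonneg (toE ((Xᵀ*X) *ᵥ v))]
  have hdet : IsUnit (Xᵀ * X).det := by
    refine (Matrix.isUnit_iff_isUnit_det _).mp (Matrix.mulVec_injective_iff_isUnit.mp ?_)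
    intro a c hac
    have h5 : (Xᵀ*X) *ᵥ (a - c) = 0 := by
      rw [Matrix.mulVec_sub, hac, sub_self]
    have h6 := hGlow (a - c)
    rw [h5] at h6
    rw [show toE (0 : Fin r → ℝ) = 0 from rfl, norm_zero] at h6
    have h8 : toE (a - c) = 0 := by
      have hnn := norm_nonneg (toE (a - c))
      have hub : ‖toE (a - c)‖ ≤ 0 := by
        have hmm := mul_le_mul_of_nonneg_right hq hnn
        linarith
      exact norm_eq_zero.mp (le_antisymm hub hnn)
    have h9 : a - c = 0 := toE_injective (by rw [h8]; rfl)
    exact sub_eq_zero.mp h9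
  have hGmul : (Xᵀ * X) * (Xᵀ * X)⁻¹ = 1 := Matrix.mul_nonsing_inv _ hdet
  have hGmul' : (Xᵀ * X)⁻¹ * (Xᵀ * X) = 1 := Matrix.nonsing_inv_mul _ hdet
  have hGinv : ‖(Xᵀ * X)⁻¹‖ ≤ 4 := by
    refine opnorm_le_bound _ (by norm_num) fun w => ?_
    have h8 : (Xᵀ * X) *ᵥ ((Xᵀ*X)⁻¹ *ᵥ w) = w := by
      rw [Matrix.mulVec_mulVec, hGmul, Matrix.one_mulVec]
    have h9 := hGlow ((Xᵀ*X)⁻¹ *ᵥ w)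
    rw [h8] at h9
    have hmm := mul_le_mul_of_nonneg_right hq (norm_nonneg (toE ((Xᵀ*X)⁻¹ *ᵥ w)))
    linarith
  have hXnorm : ‖X‖ ≤ 1 + ε := by
    calc ‖X‖ = ‖U + (X - U)‖ := by rw [show U + (X - U) = X from by abel]
      _ ≤ ‖U‖ + ‖X - U‖ := norm_add_le _ _
      _ ≤ 1 + ε := add_le_add hUnorm hE
  have hTnorm : ∀ (A : Matrix (Fin p) (Fin r) ℝ), ‖Aᵀ‖ = ‖A‖ := fun A => by
    have h := Matrix.l2_opNorm_conjTranspose A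
    rwa [Matrix.conjTranspose_eq_transpose_of_trivial] at h
  have hGsub : ‖Xᵀ * X - 1‖ ≤ (5/2) * ε := by
    have hid : Xᵀ * X - 1 = Xᵀ * (X - U) + (X - U)ᵀ * U := by
      rw [Matrix.transpose_sub, Matrix.mul_sub, Matrix.sub_mul, ← hU]
      abel
    rw [hid]
    calc ‖Xᵀ * (X - U) + (X - U)ᵀ * U‖
        ≤ ‖Xᵀ * (X - U)‖ + ‖(X - U)ᵀ * U‖ := norm_add_le _ _
      _ ≤ ‖Xᵀ‖ * ‖X - U‖ + ‖(X - U)ᵀ‖ * ‖U‖ :=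
          add_le_add (Matrix.l2_opNorm_mul _ _) (Matrix.l2_opNorm_mul _ _)
      _ ≤ (1 + ε) * ε + ε * 1 := by
          rw [hTnorm X, hTnorm (X - U)]
          have hXn0 : (0:ℝ) ≤ ‖X‖ := norm_nonneg _
          have hXUn0 : (0:ℝ) ≤ ‖X - U‖ := norm_nonneg _
          have hUn0 : (0:ℝ) ≤ ‖U‖ := norm_nonneg _
          nlinarith
      _ ≤ (5/2) * ε := by nlinarith
  have hGinvsub : ‖(Xᵀ * X)⁻¹ - 1‖ ≤ 10 * ε := by
    have hid : (Xᵀ*X)⁻¹ - 1 = (Xᵀ*X)⁻¹ * (1 - Xᵀ*X) := by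
      rw [Matrix.mul_sub, Matrix.mul_one, hGmul']
    rw [hid]
    calc ‖(Xᵀ*X)⁻¹ * (1 - Xᵀ*X)‖ ≤ ‖(Xᵀ*X)⁻¹‖ * ‖1 - Xᵀ*X‖ := Matrix.l2_opNorm_mul _ _
      _ ≤ 4 * ((5/2)*ε) := by
          rw [norm_sub_rev]
          exact mul_le_mul hGinv hGsub (norm_nonneg _) (by norm_num)
      _ = 10 * ε := by ring
  have hmain : ‖X * (Xᵀ*X)⁻¹ - U‖ ≤ 16 * ε := by
    have hid : X * (Xᵀ*X)⁻¹ - U = X * ((Xᵀ*X)⁻¹ - 1) + (X - U) := by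
      rw [Matrix.mul_sub, Matrix.mul_one]
      abel
    rw [hid]
    calc ‖X * ((Xᵀ*X)⁻¹ - 1) + (X - U)‖
        ≤ ‖X * ((Xᵀ*X)⁻¹ - 1)‖ + ‖X - U‖ := norm_add_le _ _
      _ ≤ ‖X‖ * ‖(Xᵀ*X)⁻¹ - 1‖ + ε := add_le_add (Matrix.l2_opNorm_mul _ _) hE
      _ ≤ (1+ε) * (10*ε) + ε := by
          have hXn0 : (0:ℝ) ≤ ‖X‖ := norm_nonneg _
          have hGn0 : (0:ℝ) ≤ ‖(Xᵀ*X)⁻¹ - 1‖ := norm_nonneg _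
          nlinarith
      _ ≤ 16 * ε := by nlinarith
  refine ⟨hmain, ?_⟩
  calc ‖X * (Xᵀ*X)⁻¹‖ = ‖(X * (Xᵀ*X)⁻¹ - U) + U‖ := by rw [sub_add_cancel]
    _ ≤ ‖X * (Xᵀ*X)⁻¹ - U‖ + ‖U‖ := norm_add_le _ _
    _ ≤ 16*ε + 1 := add_le_add hmain hUnorm
    _ = 1 + 16*ε := by ring

lemma spec_empty {q : ℕ} (A : Matrix (Fin q) (Fin 0) ℝ) : spec A = 0 := by
  rw [spec_eq_norm]
  have h : ‖A‖ ≤ 0 := opnorm_le_bound A le_rfl fun v => by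
    rw [Subsingleton.elim v 0, Matrix.mulVec_zero, show toE (0 : Fin q → ℝ) = 0 from rfl,
      norm_zero, zero_mul]
  exact le_antisymm h (norm_nonneg _)

end Helpers

/-- **Lemma (low-rank matrix factorization perturbation bounds).** -/
theorem matrix_factorization_perturbation_bounds :
    ∃ C : ℝ, 0 < C ∧
      ∀ (ε : ℝ), 0 < ε → ε ≤ 1 / 2 →
      ∀ (p1 p2 r : ℕ) (Ms : Matrix (Fin p1) (Fin p2) ℝ)
        (Us : Matrix (Fin p1) (Fin r) ℝ) (Vs : Matrix (Fin p2) (Fin r) ℝ)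
        (Sd : Fin r → ℝ)
        (L : Matrix (Fin p1) (Fin r) ℝ) (R : Matrix (Fin p2) (Fin r) ℝ),
        -- SVD of `M*` with positive diagonal `Σ`
        (∀ j, 0 < Sd j) →
        Usᵀ * Us = 1 → Vsᵀ * Vs = 1 →
        Ms = Us * Matrix.diagonal Sd * Vsᵀ →
        Ms.rank = r →
        -- perturbation assumption
        frobSq ((L - Us * diagSqrt Sd) * diagSqrt Sd) +
            frobSq ((R - Vs * diagSqrt Sd) * diagSqrt Sd) ≤ ε ^ 2 * (sval Ms r) ^ 2 →
        -- conclusions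
        spec ((L - Us * diagSqrt Sd) * (diagSqrt Sd)⁻¹) ≤ ε ∧
        spec ((R - Vs * diagSqrt Sd) * (diagSqrt Sd)⁻¹) ≤ ε ∧
        spec (L * (Lᵀ * L)⁻¹ * diagSqrt Sd) ≤ 1 + C * ε ∧
        spec (R * (Rᵀ * R)⁻¹ * diagSqrt Sd) ≤ 1 + C * ε ∧
        spec (L * (Lᵀ * L)⁻¹ * diagSqrt Sd - Us) ≤ C * ε ∧
        spec (R * (Rᵀ * R)⁻¹ * diagSqrt Sd - Vs) ≤ C * ε := by

  classical
  refine ⟨16, by norm_num, ?_⟩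
  intro ε hε0 hε p1 p2 r Ms Us Vs Sd L R hSd hU hV hM hrank hpert
  rcases Nat.eq_zero_or_pos r with hr0 | hr
  · subst hr0
    refine ⟨?_, ?_, ?_, ?_, ?_, ?_⟩ <;> rw [spec_empty] <;> nlinarith
  · have hrne : Nonempty (Fin r) := ⟨⟨0, hr⟩⟩
    obtain ⟨j0, -, hj0⟩ := Finset.exists_min_image Finset.univ Sd ⟨⟨0, hr⟩, Finset.mem_univ _⟩
    have hσpos : 0 < Sd j0 := hSd j0
    have hmin : ∀ j, Sd j0 ≤ Sd j := fun j => hj0 j (Finset.mem_univ j)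
    -- singular value bound
    have hsval : sval Ms r ≤ Sd j0 := by
      have hc := count_eigen_le Ms Us Vs Sd hSd hU hV hM j0 hmin
      have h := sval_le_of_count Ms (Sd j0) hσpos.le (r - 1) hc
      rwa [Nat.sub_add_cancel hr] at h
    have hsval0 : 0 ≤ sval Ms r := sval_nonneg Ms r
    set P : Matrix (Fin r) (Fin r) ℝ := diagSqrt Sd with hPdef
    have hPdet : IsUnit P.det := by
      rw [hPdef, diagSqrt, Matrix.det_diagonal]
      exact isUnit_iff_ne_zero.mpr
        (ne_of_gt (Finset.prod_pos fun j _ => Real.sqrt_pos.mpr (hSd j)))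
    have hPP : P * P⁻¹ = 1 := Matrix.mul_nonsing_inv _ hPdet
    have hPP' : P⁻¹ * P = 1 := Matrix.nonsing_inv_mul _ hPdet
    have hPt : Pᵀ = P := by rw [hPdef, diagSqrt, Matrix.diagonal_transpose]
    -- bounds coming from the perturbation hypothesis
    have hsq : ε ^ 2 * (sval Ms r) ^ 2 ≤ (ε * Sd j0) ^ 2 := by
      have h1 : sval Ms r ^ 2 ≤ Sd j0 ^ 2 := by nlinarith
      calc ε ^ 2 * (sval Ms r) ^ 2 ≤ ε ^ 2 * Sd j0 ^ 2 :=
            mul_le_mul_of_nonneg_left h1 (sq_nonneg ε)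
        _ = (ε * Sd j0) ^ 2 := by ring
    have hfb : ∀ (q : ℕ) (A : Matrix (Fin q) (Fin r) ℝ),
        frobSq A ≤ (ε * Sd j0)^2 → ‖A‖ ≤ ε * Sd j0 := by
      intro q A hA
      refine le_trans (norm_frob_le A) ?_
      rw [frob]
      calc Real.sqrt (frobSq A) ≤ Real.sqrt ((ε * Sd j0)^2) := Real.sqrt_le_sqrt hA
        _ = ε * Sd j0 := Real.sqrt_sq (by positivity)
    have hLfrob : ‖(L - Us * P) * P‖ ≤ ε * Sd j0 := by
      refine hfb _ _ ?_
      have := frobSq_nonneg ((R - Vs * P) * P)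
      nlinarith [hpert]
    have hRfrob : ‖(R - Vs * P) * P‖ ≤ ε * Sd j0 := by
      refine hfb _ _ ?_
      have := frobSq_nonneg ((L - Us * P) * P)
      nlinarith [hpert]
    -- P⁻¹ is the diagonal of inverse square roots
    have hPinv : P⁻¹ = Matrix.diagonal (fun j => (Real.sqrt (Sd j))⁻¹) := by
      refine Matrix.inv_eq_right_inv ?_
      rw [hPdef, diagSqrt, Matrix.diagonal_mul_diagonal]
      rw [show (fun j => Real.sqrt (Sd j) * (Real.sqrt (Sd j))⁻¹) = fun _ : Fin r => (1:ℝ) from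
        funext fun j => mul_inv_cancel₀ (ne_of_gt (Real.sqrt_pos.mpr (hSd j)))]
      exact Matrix.diagonal_one
    have hsplit : ∀ (q : ℕ) (A : Matrix (Fin q) (Fin r) ℝ),
        A * P⁻¹ = (A * P) * (Matrix.diagonal fun j => (Sd j)⁻¹) := by
      intro q A
      rw [Matrix.mul_assoc]
      congr 1
      rw [hPinv, hPdef, diagSqrt, Matrix.diagonal_mul_diagonal]
      refine congrArg Matrix.diagonal (funext fun j => ?_)
      have hsne : Real.sqrt (Sd j) ≠ 0 := ne_of_gt (Real.sqrt_pos.mpr (hSd j))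
      field_simp
      rw [Real.sq_sqrt (hSd j).le, div_self (hSd j).ne']
    have hdiag : ‖(Matrix.diagonal fun j => (Sd j)⁻¹ : Matrix (Fin r) (Fin r) ℝ)‖
        ≤ (Sd j0)⁻¹ := by
      refine norm_diagonal_le _ (by positivity) fun j => ?_
      rw [abs_of_pos (inv_pos.mpr (hSd j))]
      exact inv_anti₀ hσpos (hmin j)
    have hEbound : ∀ (q : ℕ) (A : Matrix (Fin q) (Fin r) ℝ),
        ‖A * P‖ ≤ ε * Sd j0 → ‖A * P⁻¹‖ ≤ ε := by
      intro q A hA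
      rw [hsplit]
      calc ‖(A * P) * (Matrix.diagonal fun j => (Sd j)⁻¹)‖
          ≤ ‖A * P‖ * ‖(Matrix.diagonal fun j => (Sd j)⁻¹ : Matrix (Fin r) (Fin r) ℝ)‖ :=
            Matrix.l2_opNorm_mul _ _
        _ ≤ (ε * Sd j0) * (Sd j0)⁻¹ := by
            refine mul_le_mul hA hdiag (norm_nonneg _) (by positivity)
        _ = ε := by field_simp
    have hEL : ‖(L - Us * P) * P⁻¹‖ ≤ ε := hEbound _ _ hLfrob
    have hER : ‖(R - Vs * P) * P⁻¹‖ ≤ ε := hEbound _ _ hRfrob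
    -- normalized factors
    have hkey : ∀ (q : ℕ) (W K : Matrix (Fin q) (Fin r) ℝ), Wᵀ * W = 1 →
        ‖(K - W * P) * P⁻¹‖ ≤ ε →
        ‖K * (Kᵀ * K)⁻¹ * P - W‖ ≤ 16 * ε ∧ ‖K * (Kᵀ * K)⁻¹ * P‖ ≤ 1 + 16 * ε := by
      intro q W K hW hEK
      set XK : Matrix (Fin q) (Fin r) ℝ := K * P⁻¹ with hXK
      have hXW : XK - W = (K - W * P) * P⁻¹ := by
        rw [Matrix.sub_mul, Matrix.mul_assoc, hPP, Matrix.mul_one]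
      have hEX : ‖XK - W‖ ≤ ε := by rw [hXW]; exact hEK
      obtain ⟨hm, hn⟩ := side W XK hε0 hε hW hEX
      have hKP : K = XK * P := by rw [hXK, Matrix.mul_assoc, hPP', Matrix.mul_one]
      have hGram : Kᵀ * K = P * (XKᵀ * XK) * P := by
        rw [hKP, Matrix.transpose_mul, hPt]
        simp only [Matrix.mul_assoc]
      have hident : K * (Kᵀ * K)⁻¹ * P = XK * (XKᵀ * XK)⁻¹ := by
        rw [hGram, Matrix.mul_inv_rev, Matrix.mul_inv_rev, hKP]
        simp only [Matrix.mul_assoc]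
        rw [hPP', Matrix.mul_one, ← Matrix.mul_assoc P P⁻¹, hPP, Matrix.one_mul]
      rw [hident]
      exact ⟨hm, hn⟩
    obtain ⟨hL5, hL3⟩ := hkey _ Us L hU hEL
    obtain ⟨hR5, hR3⟩ := hkey _ Vs R hV hER
    refine ⟨?_, ?_, ?_, ?_, ?_, ?_⟩
    · rw [spec_eq_norm]; exact hEL
    · rw [spec_eq_norm]; exact hER
    · rw [spec_eq_norm]; exact hL3
    · rw [spec_eq_norm]; exact hR3
    · rw [spec_eq_norm]; exact hL5
    · rw [spec_eq_norm]; exact hR5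


end HomoPursuit
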